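/- arXiv:2006.11822 — 3 statements merged into one kernel-verified Lean document; each statement's English description precedes it below -/
import Mathlib

section
/- An element m of the left 𝕆-module 𝕆 (with action given by octonion multiplication) is associative, i.e., (pq)m = p(qm) for all p,q ∈ 𝕆, if and only if m is a real scalar multiple of 1. -/
noncomputable section

open Quaternion

/-- The octonions, via the Cayley–Dickson construction on the quaternions. -/
def Octonion : Type := ℍ[ℝ] × ℍ[ℝ]

namespace Octonion

instance : AddCommGroup Octonion := inferInstanceAs (AddCommGroup (ℍ[ℝ] × ℍ[ℝ]))
instance : Module ℝ Octonion := inferInstanceAs (Module ℝ (ℍ[ℝ] × ℍ[ℝ]))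

instance : One Octonion := ⟨((1 : ℍ[ℝ]), (0 : ℍ[ℝ]))⟩
instance : Mul Octonion :=
  ⟨fun x y => (x.1 * y.1 - star y.2 * x.2, y.2 * x.1 + x.2 * star y.1)⟩
/-- Octonionic conjugation. -/
instance : Star Octonion := ⟨fun x => (star x.1, -x.2)⟩

/-- The associator `[a,b,c] = (ab)c - a(bc)`. -/
def assoc (a b c : Octonion) : Octonion := a * b * c - a * (b * c)

/-- The standard imaginary units `e 0 = e₁, …, e 6 = e₇`. -/
def e : Fin 7 → Octonion
  | 0 => ((⟨0,1,0,0⟩ : ℍ[ℝ]), 0)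
  | 1 => ((⟨0,0,1,0⟩ : ℍ[ℝ]), 0)
  | 2 => ((⟨0,0,0,1⟩ : ℍ[ℝ]), 0)
  | 3 => (0, (1 : ℍ[ℝ]))
  | 4 => (0, (⟨0,1,0,0⟩ : ℍ[ℝ]))
  | 5 => (0, (⟨0,0,1,0⟩ : ℍ[ℝ]))
  | 6 => (0, (⟨0,0,0,1⟩ : ℍ[ℝ]))

end Octonion

/-- A left `𝕆`-module: a real vector space with an `ℝ`-bilinear octonion action
satisfying `1 • m = m` and the alternating rule. -/
structure LeftOModule (M : Type) [AddCommGroup M] [Module ℝ M] where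
  smul : Octonion →ₗ[ℝ] M →ₗ[ℝ] M
  one_smul : ∀ m : M, smul 1 m = m
  alt : ∀ (p q : Octonion) (m : M),
    smul (p * q) m - smul p (smul q m) = -(smul (q * p) m - smul q (smul p m))

/-- An `𝕆`-bimodule: compatible left and right `𝕆`-module structures with
`[p,q,m] = [q,m,p] = [m,p,q]`.  Here `l p m` is `p * m` and `r p m` is `m * p`. -/
structure OBimodule (M : Type) [AddCommGroup M] [Module ℝ M] where
  l : Octonion →ₗ[ℝ] M →ₗ[ℝ] M
  r : Octonion →ₗ[ℝ] M →ₗ[ℝ] M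
  one_l : ∀ m : M, l 1 m = m
  one_r : ∀ m : M, r 1 m = m
  /-- left alternating rule `[p,q,m] = -[q,p,m]` -/
  alt_l : ∀ (p q : Octonion) (m : M),
    l (p * q) m - l p (l q m) = -(l (q * p) m - l q (l p m))
  /-- right alternating rule `[m,p,q] = -[m,q,p]` -/
  alt_r : ∀ (p q : Octonion) (m : M),
    r q (r p m) - r (p * q) m = -(r p (r q m) - r (q * p) m)
  /-- `[p,q,m] = [q,m,p]` -/
  comp_lm : ∀ (p q : Octonion) (m : M),
    l (p * q) m - l p (l q m) = r p (l q m) - l q (r p m)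
  /-- `[p,q,m] = [m,p,q]` -/
  comp_rm : ∀ (p q : Octonion) (m : M),
    l (p * q) m - l p (l q m) = r q (r p m) - r (p * q) m



lemma Octonion.mul_def (x y : Octonion) :
    x * y = (x.1 * y.1 - star y.2 * x.2, y.2 * x.1 + x.2 * star y.1) := rfl

lemma Octonion.one_def : (1 : Octonion) = ((1 : ℍ[ℝ]), (0 : ℍ[ℝ])) := rfl

lemma Octonion.smul_def (r : ℝ) (x : Octonion) : r • x = (r • x.1, r • x.2) := rfl

lemma Octonion.smul_one (r : ℝ) : r • (1 : Octonion) = ((⟨r,0,0,0⟩ : ℍ[ℝ]), (0 : ℍ[ℝ])) :=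
  Prod.ext (QuaternionAlgebra.ext (mul_one r) (mul_zero r) (mul_zero r) (mul_zero r))
    (QuaternionAlgebra.ext (mul_zero r) (mul_zero r) (mul_zero r) (mul_zero r))

lemma Octonion.eq_iff (x y : Octonion) : x = y ↔ x.1 = y.1 ∧ x.2 = y.2 :=
  Prod.ext_iff

lemma Octonion.mul_fst (x y : Octonion) : (x * y).1 = x.1 * y.1 - star y.2 * x.2 := rfl

lemma Octonion.mul_snd (x y : Octonion) : (x * y).2 = y.2 * x.1 + x.2 * star y.1 := rfl

lemma Octonion.smul_fst (r : ℝ) (x : Octonion) : (r • x).1 = r • x.1 := rfl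

lemma Octonion.smul_snd (r : ℝ) (x : Octonion) : (r • x).2 = r • x.2 := rfl

lemma Octonion.one_fst : (1 : Octonion).1 = 1 := rfl

lemma Octonion.one_snd : (1 : Octonion).2 = 0 := rfl

/-- In the left `𝕆`-module `𝕆`, an element is associative iff it is a real
multiple of `1`. -/
theorem assoc_of_O_self (m : Octonion) :
    (∀ p q : Octonion, (p * q) * m = p * (q * m)) ↔ ∃ r : ℝ, m = r • (1 : Octonion) := by
  constructor
  · intro h
    have h1 := h (Octonion.e 0) (Octonion.e 1)
    have h2 := h (Octonion.e 3) (Octonion.e 4)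
    have h3 := h (Octonion.e 1) (Octonion.e 3)
    simp only [Octonion.mul_fst, Octonion.mul_snd, Octonion.eq_iff, Quaternion.ext_iff,
      Quaternion.re_mul, Quaternion.imI_mul, Quaternion.imJ_mul,
      Quaternion.imK_mul, Quaternion.re_star, Quaternion.imI_star, Quaternion.imJ_star,
      Quaternion.imK_star, Quaternion.re_sub, Quaternion.imI_sub, Quaternion.imJ_sub,
      Quaternion.imK_sub, Quaternion.re_add, Quaternion.imI_add, Quaternion.imJ_add,
      Quaternion.imK_add] at h1 h2 h3
    simp only [Octonion.e, Quaternion.re_zero, Quaternion.imI_zero, Quaternion.imJ_zero,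
      Quaternion.imK_zero, Quaternion.re_one, Quaternion.imI_one, Quaternion.imJ_one,
      Quaternion.imK_one, sub_zero, zero_mul, mul_zero, zero_add, add_zero, neg_zero, zero_sub,
      one_mul, mul_one, neg_neg, and_true, true_and] at h1 h2 h3
    casesm* _ ∧ _
    refine ⟨m.1.re, ?_⟩
    simp only [Octonion.eq_iff, Octonion.smul_fst, Octonion.smul_snd, Octonion.one_fst, Octonion.one_snd, Quaternion.ext_iff,
      Quaternion.re_smul, Quaternion.imI_smul, Quaternion.imJ_smul, Quaternion.imK_smul,
      Quaternion.re_zero, Quaternion.imI_zero, Quaternion.imJ_zero, Quaternion.imK_zero,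
      Quaternion.re_one, Quaternion.imI_one, Quaternion.imJ_one, Quaternion.imK_one,
      smul_eq_mul, mul_one, mul_zero, smul_zero, and_true, true_and]
    and_intros <;> linarith
  · rintro ⟨r, rfl⟩ p q
    refine Prod.ext (QuaternionAlgebra.ext ?_ ?_ ?_ ?_) (QuaternionAlgebra.ext ?_ ?_ ?_ ?_)
    all_goals simp only [Octonion.mul_fst, Octonion.mul_snd, Octonion.smul_fst, Octonion.smul_snd, Octonion.one_fst, Octonion.one_snd,
      Quaternion.re_mul, Quaternion.imI_mul, Quaternion.imJ_mul,
      Quaternion.imK_mul, Quaternion.re_star, Quaternion.imI_star, Quaternion.imJ_star,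
      Quaternion.imK_star, Quaternion.re_sub, Quaternion.imI_sub, Quaternion.imJ_sub,
      Quaternion.imK_sub, Quaternion.re_add, Quaternion.imI_add, Quaternion.imJ_add,
      Quaternion.imK_add, Quaternion.re_smul, Quaternion.imI_smul, Quaternion.imJ_smul,
      Quaternion.imK_smul, Quaternion.re_zero, Quaternion.imI_zero, Quaternion.imJ_zero,
      Quaternion.imK_zero, Quaternion.re_one, Quaternion.imI_one, Quaternion.imJ_one,
      Quaternion.imK_one, smul_eq_mul, smul_zero, star_zero, sub_zero, zero_mul, mul_zero,
      zero_add, add_zero, neg_zero, mul_one]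
    all_goals ring
end
end

section
/- Let M be an 𝕆-bimodule and m ∈ M a conjugate associative element, meaning (pq)m = q(pm) and (mp)q = m(qp) for all p,q ∈ 𝕆. Then for every purely imaginary octonion b, mb = -bm, i.e., mb = b̄m. -/
noncomputable section

open Quaternion

namespace Octonion

lemma mul_def' (x y : Octonion) :
    x * y = (x.1 * y.1 - star y.2 * x.2, y.2 * x.1 + x.2 * star y.1) := rfl
lemma sub_fst' (x y : Octonion) : (x - y).1 = x.1 - y.1 := rfl
lemma sub_snd' (x y : Octonion) : (x - y).2 = x.2 - y.2 := rfl
lemma add_fst' (x y : Octonion) : (x + y).1 = x.1 + y.1 := rfl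
lemma add_snd' (x y : Octonion) : (x + y).2 = x.2 + y.2 := rfl
lemma smul_fst' (c : ℝ) (x : Octonion) : (c • x).1 = c • x.1 := rfl
lemma smul_snd' (c : ℝ) (x : Octonion) : (c • x).2 = c • x.2 := rfl
lemma star_def' (x : Octonion) : star x = (star x.1, -x.2) := rfl

lemma e0_comm : e 0 = (1/2 : ℝ) • (e 1 * e 2 - e 2 * e 1) := by
  refine Prod.ext ?_ ?_
  · rw [smul_fst', sub_fst', mul_def', mul_def']
    ext <;> simp only [Quaternion.re_smul, Quaternion.imI_smul, Quaternion.imJ_smul, Quaternion.imK_smul,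
      Quaternion.re_sub, Quaternion.imI_sub, Quaternion.imJ_sub, Quaternion.imK_sub,
      Quaternion.re_mul, Quaternion.imI_mul, Quaternion.imJ_mul, Quaternion.imK_mul,
      Quaternion.re_add, Quaternion.imI_add, Quaternion.imJ_add, Quaternion.imK_add,
      Quaternion.re_star, Quaternion.imI_star, Quaternion.imJ_star, Quaternion.imK_star] <;>
      simp [e] <;> norm_num
  · rw [smul_snd', sub_snd', mul_def', mul_def']
    ext <;> simp only [Quaternion.re_smul, Quaternion.imI_smul, Quaternion.imJ_smul, Quaternion.imK_smul,
      Quaternion.re_sub, Quaternion.imI_sub, Quaternion.imJ_sub, Quaternion.imK_sub,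
      Quaternion.re_mul, Quaternion.imI_mul, Quaternion.imJ_mul, Quaternion.imK_mul,
      Quaternion.re_add, Quaternion.imI_add, Quaternion.imJ_add, Quaternion.imK_add,
      Quaternion.re_star, Quaternion.imI_star, Quaternion.imJ_star, Quaternion.imK_star] <;>
      simp [e] <;> norm_num

lemma e1_comm : e 1 = (1/2 : ℝ) • (e 2 * e 0 - e 0 * e 2) := by
  refine Prod.ext ?_ ?_
  · rw [smul_fst', sub_fst', mul_def', mul_def']
    ext <;> simp only [Quaternion.re_smul, Quaternion.imI_smul, Quaternion.imJ_smul, Quaternion.imK_smul,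
      Quaternion.re_sub, Quaternion.imI_sub, Quaternion.imJ_sub, Quaternion.imK_sub,
      Quaternion.re_mul, Quaternion.imI_mul, Quaternion.imJ_mul, Quaternion.imK_mul,
      Quaternion.re_add, Quaternion.imI_add, Quaternion.imJ_add, Quaternion.imK_add,
      Quaternion.re_star, Quaternion.imI_star, Quaternion.imJ_star, Quaternion.imK_star] <;>
      simp [e] <;> norm_num
  · rw [smul_snd', sub_snd', mul_def', mul_def']
    ext <;> simp only [Quaternion.re_smul, Quaternion.imI_smul, Quaternion.imJ_smul, Quaternion.imK_smul,
      Quaternion.re_sub, Quaternion.imI_sub, Quaternion.imJ_sub, Quaternion.imK_sub,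
      Quaternion.re_mul, Quaternion.imI_mul, Quaternion.imJ_mul, Quaternion.imK_mul,
      Quaternion.re_add, Quaternion.imI_add, Quaternion.imJ_add, Quaternion.imK_add,
      Quaternion.re_star, Quaternion.imI_star, Quaternion.imJ_star, Quaternion.imK_star] <;>
      simp [e] <;> norm_num

lemma e2_comm : e 2 = (1/2 : ℝ) • (e 0 * e 1 - e 1 * e 0) := by
  refine Prod.ext ?_ ?_
  · rw [smul_fst', sub_fst', mul_def', mul_def']
    ext <;> simp only [Quaternion.re_smul, Quaternion.imI_smul, Quaternion.imJ_smul, Quaternion.imK_smul,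
      Quaternion.re_sub, Quaternion.imI_sub, Quaternion.imJ_sub, Quaternion.imK_sub,
      Quaternion.re_mul, Quaternion.imI_mul, Quaternion.imJ_mul, Quaternion.imK_mul,
      Quaternion.re_add, Quaternion.imI_add, Quaternion.imJ_add, Quaternion.imK_add,
      Quaternion.re_star, Quaternion.imI_star, Quaternion.imJ_star, Quaternion.imK_star] <;>
      simp [e] <;> norm_num
  · rw [smul_snd', sub_snd', mul_def', mul_def']
    ext <;> simp only [Quaternion.re_smul, Quaternion.imI_smul, Quaternion.imJ_smul, Quaternion.imK_smul,
      Quaternion.re_sub, Quaternion.imI_sub, Quaternion.imJ_sub, Quaternion.imK_sub,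
      Quaternion.re_mul, Quaternion.imI_mul, Quaternion.imJ_mul, Quaternion.imK_mul,
      Quaternion.re_add, Quaternion.imI_add, Quaternion.imJ_add, Quaternion.imK_add,
      Quaternion.re_star, Quaternion.imI_star, Quaternion.imJ_star, Quaternion.imK_star] <;>
      simp [e] <;> norm_num

lemma e3_comm : e 3 = (1/2 : ℝ) • (e 4 * e 0 - e 0 * e 4) := by
  refine Prod.ext ?_ ?_
  · rw [smul_fst', sub_fst', mul_def', mul_def']
    ext <;> simp only [Quaternion.re_smul, Quaternion.imI_smul, Quaternion.imJ_smul, Quaternion.imK_smul,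
      Quaternion.re_sub, Quaternion.imI_sub, Quaternion.imJ_sub, Quaternion.imK_sub,
      Quaternion.re_mul, Quaternion.imI_mul, Quaternion.imJ_mul, Quaternion.imK_mul,
      Quaternion.re_add, Quaternion.imI_add, Quaternion.imJ_add, Quaternion.imK_add,
      Quaternion.re_star, Quaternion.imI_star, Quaternion.imJ_star, Quaternion.imK_star] <;>
      simp [e] <;> norm_num
  · rw [smul_snd', sub_snd', mul_def', mul_def']
    ext <;> simp only [Quaternion.re_smul, Quaternion.imI_smul, Quaternion.imJ_smul, Quaternion.imK_smul,
      Quaternion.re_sub, Quaternion.imI_sub, Quaternion.imJ_sub, Quaternion.imK_sub,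
      Quaternion.re_mul, Quaternion.imI_mul, Quaternion.imJ_mul, Quaternion.imK_mul,
      Quaternion.re_add, Quaternion.imI_add, Quaternion.imJ_add, Quaternion.imK_add,
      Quaternion.re_star, Quaternion.imI_star, Quaternion.imJ_star, Quaternion.imK_star] <;>
      simp [e] <;> norm_num

lemma e4_comm : e 4 = (1/2 : ℝ) • (e 0 * e 3 - e 3 * e 0) := by
  refine Prod.ext ?_ ?_
  · rw [smul_fst', sub_fst', mul_def', mul_def']
    ext <;> simp only [Quaternion.re_smul, Quaternion.imI_smul, Quaternion.imJ_smul, Quaternion.imK_smul,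
      Quaternion.re_sub, Quaternion.imI_sub, Quaternion.imJ_sub, Quaternion.imK_sub,
      Quaternion.re_mul, Quaternion.imI_mul, Quaternion.imJ_mul, Quaternion.imK_mul,
      Quaternion.re_add, Quaternion.imI_add, Quaternion.imJ_add, Quaternion.imK_add,
      Quaternion.re_star, Quaternion.imI_star, Quaternion.imJ_star, Quaternion.imK_star] <;>
      simp [e] <;> norm_num
  · rw [smul_snd', sub_snd', mul_def', mul_def']
    ext <;> simp only [Quaternion.re_smul, Quaternion.imI_smul, Quaternion.imJ_smul, Quaternion.imK_smul,
      Quaternion.re_sub, Quaternion.imI_sub, Quaternion.imJ_sub, Quaternion.imK_sub,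
      Quaternion.re_mul, Quaternion.imI_mul, Quaternion.imJ_mul, Quaternion.imK_mul,
      Quaternion.re_add, Quaternion.imI_add, Quaternion.imJ_add, Quaternion.imK_add,
      Quaternion.re_star, Quaternion.imI_star, Quaternion.imJ_star, Quaternion.imK_star] <;>
      simp [e] <;> norm_num

lemma e5_comm : e 5 = (1/2 : ℝ) • (e 1 * e 3 - e 3 * e 1) := by
  refine Prod.ext ?_ ?_
  · rw [smul_fst', sub_fst', mul_def', mul_def']
    ext <;> simp only [Quaternion.re_smul, Quaternion.imI_smul, Quaternion.imJ_smul, Quaternion.imK_smul,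
      Quaternion.re_sub, Quaternion.imI_sub, Quaternion.imJ_sub, Quaternion.imK_sub,
      Quaternion.re_mul, Quaternion.imI_mul, Quaternion.imJ_mul, Quaternion.imK_mul,
      Quaternion.re_add, Quaternion.imI_add, Quaternion.imJ_add, Quaternion.imK_add,
      Quaternion.re_star, Quaternion.imI_star, Quaternion.imJ_star, Quaternion.imK_star] <;>
      simp [e] <;> norm_num
  · rw [smul_snd', sub_snd', mul_def', mul_def']
    ext <;> simp only [Quaternion.re_smul, Quaternion.imI_smul, Quaternion.imJ_smul, Quaternion.imK_smul,
      Quaternion.re_sub, Quaternion.imI_sub, Quaternion.imJ_sub, Quaternion.imK_sub,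
      Quaternion.re_mul, Quaternion.imI_mul, Quaternion.imJ_mul, Quaternion.imK_mul,
      Quaternion.re_add, Quaternion.imI_add, Quaternion.imJ_add, Quaternion.imK_add,
      Quaternion.re_star, Quaternion.imI_star, Quaternion.imJ_star, Quaternion.imK_star] <;>
      simp [e] <;> norm_num

lemma e6_comm : e 6 = (1/2 : ℝ) • (e 2 * e 3 - e 3 * e 2) := by
  refine Prod.ext ?_ ?_
  · rw [smul_fst', sub_fst', mul_def', mul_def']
    ext <;> simp only [Quaternion.re_smul, Quaternion.imI_smul, Quaternion.imJ_smul, Quaternion.imK_smul,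
      Quaternion.re_sub, Quaternion.imI_sub, Quaternion.imJ_sub, Quaternion.imK_sub,
      Quaternion.re_mul, Quaternion.imI_mul, Quaternion.imJ_mul, Quaternion.imK_mul,
      Quaternion.re_add, Quaternion.imI_add, Quaternion.imJ_add, Quaternion.imK_add,
      Quaternion.re_star, Quaternion.imI_star, Quaternion.imJ_star, Quaternion.imK_star] <;>
      simp [e] <;> norm_num
  · rw [smul_snd', sub_snd', mul_def', mul_def']
    ext <;> simp only [Quaternion.re_smul, Quaternion.imI_smul, Quaternion.imJ_smul, Quaternion.imK_smul,
      Quaternion.re_sub, Quaternion.imI_sub, Quaternion.imJ_sub, Quaternion.imK_sub,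
      Quaternion.re_mul, Quaternion.imI_mul, Quaternion.imJ_mul, Quaternion.imK_mul,
      Quaternion.re_add, Quaternion.imI_add, Quaternion.imJ_add, Quaternion.imK_add,
      Quaternion.re_star, Quaternion.imI_star, Quaternion.imJ_star, Quaternion.imK_star] <;>
      simp [e] <;> norm_num

/-- Decomposition of a purely imaginary octonion over the standard units. -/
lemma imaginary_decomp (b : Octonion) (hre : b.1.re = 0) :
    b = b.1.imI • e 0 + b.1.imJ • e 1 + b.1.imK • e 2 + b.2.re • e 3
        + b.2.imI • e 4 + b.2.imJ • e 5 + b.2.imK • e 6 := by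
  refine Prod.ext ?_ ?_
  · simp only [add_fst', smul_fst']
    ext <;> simp only [Quaternion.re_smul, Quaternion.imI_smul, Quaternion.imJ_smul, Quaternion.imK_smul,
      Quaternion.re_add, Quaternion.imI_add, Quaternion.imJ_add, Quaternion.imK_add] <;> simp [e, hre]
  · simp only [add_snd', smul_snd']
    ext <;> simp only [Quaternion.re_smul, Quaternion.imI_smul, Quaternion.imJ_smul, Quaternion.imK_smul,
      Quaternion.re_add, Quaternion.imI_add, Quaternion.imJ_add, Quaternion.imK_add] <;> simp [e]

end Octonion

/-- For a conjugate associative element `m` of an `𝕆`-bimodule and purely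
imaginary `b`, one has `mb = -bm`, i.e. `mb = b̄m`. -/
theorem bimodule_conjAssoc_anticomm {M : Type} [AddCommGroup M] [Module ℝ M]
    (B : OBimodule M) (m : M)
    (h1 : ∀ p q : Octonion, B.l (p * q) m = B.l q (B.l p m))
    (h2 : ∀ p q : Octonion, B.r q (B.r p m) = B.r (q * p) m)
    (b : Octonion) (hb : star b = -b) :
    B.r b m = -(B.l b m) ∧ B.r b m = B.l (star b) m := by
  -- `B.l c m + B.r c m = 0` for every commutator `c = p*q - q*p`
  have key : ∀ p q : Octonion, B.l (p * q - q * p) m + B.r (p * q - q * p) m = 0 := by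
    intro p q
    have c1 := B.comp_rm p q m
    rw [← h1 q p, h2 p q] at c1
    rw [map_sub B.l, map_sub B.r, LinearMap.sub_apply, LinearMap.sub_apply, c1]
    abel
  -- hence it vanishes on each imaginary unit
  have he : ∀ i : Fin 7, B.l (Octonion.e i) m + B.r (Octonion.e i) m = 0 := by
    have aux : ∀ (i : Fin 7) (p q : Octonion),
        Octonion.e i = (1/2 : ℝ) • (p * q - q * p) →
        B.l (Octonion.e i) m + B.r (Octonion.e i) m = 0 := by
      intro i p q h
      rw [h, map_smul, map_smul, LinearMap.smul_apply, LinearMap.smul_apply,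
        ← smul_add, key, smul_zero]
    intro i
    fin_cases i
    · exact aux 0 _ _ Octonion.e0_comm
    · exact aux 1 _ _ Octonion.e1_comm
    · exact aux 2 _ _ Octonion.e2_comm
    · exact aux 3 _ _ Octonion.e3_comm
    · exact aux 4 _ _ Octonion.e4_comm
    · exact aux 5 _ _ Octonion.e5_comm
    · exact aux 6 _ _ Octonion.e6_comm
  -- `b` is purely imaginary
  have hre : b.1.re = 0 := by
    have := congrArg (fun x : Octonion => x.1.re) hb
    simp only [Octonion.star_def', Quaternion.re_star] at this
    have h2' : ((-b : Octonion).1 : ℍ[ℝ]).re = -b.1.re := rfl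
    rw [h2'] at this
    linarith
  have hdecomp := Octonion.imaginary_decomp b hre
  -- the map `x ↦ B.l x m + B.r x m` vanishes at `b`
  have hg : B.l b m + B.r b m = 0 := by
    have h0 := he 0; have h1' := he 1; have h2' := he 2; have h3' := he 3
    have h4' := he 4; have h5' := he 5; have h6' := he 6
    rw [hdecomp]
    simp only [map_add, map_smul, LinearMap.add_apply, LinearMap.smul_apply]
    have r0 : B.r (Octonion.e 0) m = -(B.l (Octonion.e 0) m) := by linear_combination (norm := abel) h0
    have r1 : B.r (Octonion.e 1) m = -(B.l (Octonion.e 1) m) := by linear_combination (norm := abel) h1'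
    have r2 : B.r (Octonion.e 2) m = -(B.l (Octonion.e 2) m) := by linear_combination (norm := abel) h2'
    have r3 : B.r (Octonion.e 3) m = -(B.l (Octonion.e 3) m) := by linear_combination (norm := abel) h3'
    have r4 : B.r (Octonion.e 4) m = -(B.l (Octonion.e 4) m) := by linear_combination (norm := abel) h4'
    have r5 : B.r (Octonion.e 5) m = -(B.l (Octonion.e 5) m) := by linear_combination (norm := abel) h5'
    have r6 : B.r (Octonion.e 6) m = -(B.l (Octonion.e 6) m) := by linear_combination (norm := abel) h6'
    rw [r0, r1, r2, r3, r4, r5, r6]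
    module
  have hmain : B.r b m = -(B.l b m) := by linear_combination (norm := abel) hg
  refine ⟨hmain, ?_⟩
  rw [hb, map_neg, LinearMap.neg_apply, hmain]
end
end

section
/- The left 𝕆-module 𝕆̄ (with action p ⋆ m = p̄m) admits no right 𝕆-module action making it an 𝕆-bimodule. -/
noncomputable section

open Quaternion

namespace Octonion

/-- Helper constructor keeping the type `Octonion` (so that `Octonion`'s own
instances, not `Prod`'s, are used). -/
def mk (x1 x2 : ℍ[ℝ]) : Octonion := (x1, x2)

lemma mk_mul_mk (x1 x2 y1 y2 : ℍ[ℝ]) :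
    mk x1 x2 * mk y1 y2 = mk (x1 * y1 - star y2 * x2) (y2 * x1 + x2 * star y1) := rfl

lemma mk_inj (x1 x2 y1 y2 : ℍ[ℝ]) :
    mk x1 x2 = mk y1 y2 ↔ (x1 = y1 ∧ x2 = y2) := Iff.of_eq (Prod.mk.injEq ..)

lemma neg_mk (x1 x2 : ℍ[ℝ]) : -(mk x1 x2) = mk (-x1) (-x2) := rfl
lemma star_mk (x1 x2 : ℍ[ℝ]) : star (mk x1 x2) = mk (star x1) (-x2) := rfl
lemma add_mk (x1 x2 y1 y2 : ℍ[ℝ]) : mk x1 x2 + mk y1 y2 = mk (x1 + y1) (x2 + y2) := rfl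
lemma sub_mk (x1 x2 y1 y2 : ℍ[ℝ]) : mk x1 x2 - mk y1 y2 = mk (x1 - y1) (x2 - y2) := rfl
lemma one_def_s15 : (1 : Octonion) = mk 1 0 := rfl
lemma e0_def : Octonion.e 0 = mk (@id ℍ[ℝ] ⟨0,1,0,0⟩) 0 := rfl
lemma e1_def : Octonion.e 1 = mk (@id ℍ[ℝ] ⟨0,0,1,0⟩) 0 := rfl
lemma e3_def : Octonion.e 3 = mk 0 1 := rfl

/-- first component -/
def c1 (x : Octonion) : ℍ[ℝ] := (show ℍ[ℝ] × ℍ[ℝ] from x).1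
/-- second component -/
def c2 (x : Octonion) : ℍ[ℝ] := (show ℍ[ℝ] × ℍ[ℝ] from x).2

lemma mk_c (x : Octonion) : mk (c1 x) (c2 x) = x := rfl

lemma omul_one (x : Octonion) : x * 1 = x := by
  rw [← mk_c x, one_def_s15, mk_mul_mk, mk_inj]
  constructor <;> simp

lemma ostar_star (x : Octonion) : star (star x) = x := by
  rw [← mk_c x, star_mk, star_mk, mk_inj]
  constructor <;> simp

lemma ostar_mul (x y : Octonion) : star (x * y) = star y * star x := by
  rw [← mk_c x, ← mk_c y, mk_mul_mk, star_mk, star_mk, star_mk, mk_mul_mk, mk_inj]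
  constructor
  · simp [star_sub, star_mul, star_star]
  · simp only [neg_mul, mul_neg, star_star, neg_add_rev, neg_neg]
    try abel

lemma oneg_mul (x y : Octonion) : (-x) * y = -(x * y) := by
  rw [← mk_c x, ← mk_c y, neg_mk, mk_mul_mk, mk_mul_mk, neg_mk, mk_inj]
  constructor <;> · simp only [neg_mul, mul_neg, neg_add_rev, neg_sub, neg_neg]; abel

lemma omul_neg (x y : Octonion) : x * (-y) = -(x * y) := by
  rw [← mk_c x, ← mk_c y, neg_mk, mk_mul_mk, mk_mul_mk, neg_mk, mk_inj]
  constructor <;> · simp only [neg_mul, mul_neg, star_neg, neg_add_rev, neg_sub, neg_neg]; abel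

lemma omul_add (x y z : Octonion) : x * (y + z) = x * y + x * z := by
  rw [← mk_c x, ← mk_c y, ← mk_c z, add_mk, mk_mul_mk, mk_mul_mk, mk_mul_mk, add_mk, mk_inj]
  constructor <;> · simp only [mul_add, add_mul, star_add]; abel

lemma id_re (a b c d : ℝ) : (@id ℍ[ℝ] ⟨a, b, c, d⟩).re = a := rfl
lemma id_imI (a b c d : ℝ) : (@id ℍ[ℝ] ⟨a, b, c, d⟩).imI = b := rfl
lemma id_imJ (a b c d : ℝ) : (@id ℍ[ℝ] ⟨a, b, c, d⟩).imJ = c := rfl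
lemma id_imK (a b c d : ℝ) : (@id ℍ[ℝ] ⟨a, b, c, d⟩).imK = d := rfl

lemma star_e0 : star (Octonion.e 0) = -(Octonion.e 0) := by
  rw [e0_def, star_mk, neg_mk, mk_inj]
  constructor
  · ext <;> simp [id_re, id_imI, id_imJ, id_imK]
  · simp

lemma e0_mul_e0 : Octonion.e 0 * Octonion.e 0 = -1 := by
  rw [e0_def, mk_mul_mk, one_def_s15, neg_mk, mk_inj]
  constructor
  · ext <;> simp [id_re, id_imI, id_imJ, id_imK, Quaternion.re_mul, Quaternion.imI_mul, Quaternion.imJ_mul, Quaternion.imK_mul]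
  · simp


lemma ostar_one : star (1 : Octonion) = 1 := by
  rw [one_def_s15, star_mk, mk_inj]
  constructor <;> simp

lemma ostar_neg (x : Octonion) : star (-x) = -(star x) := by
  rw [← mk_c x, neg_mk, star_mk, star_mk, neg_mk, mk_inj]
  constructor <;> simp

end Octonion


set_option maxHeartbeats 2000000 in
/-- The conjugate left `𝕆`-module `𝕆̄` (left action `p ⋆ m = p̄m`) admits no
right action making it an `𝕆`-bimodule. -/
theorem conj_module_no_bimodule :
    ¬ ∃ B : OBimodule Octonion, ∀ p m : Octonion, B.l p m = star p * m := by
  rintro ⟨B, h⟩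
  set d : Octonion := B.r (Octonion.e 0) 1 with hd
  have hF : ∀ x : Octonion, B.r (Octonion.e 0) x
      = -(x * Octonion.e 0) + Octonion.e 0 * x + x * d := by
    intro x
    have H := B.comp_lm (Octonion.e 0) (star x) 1
    simp only [h] at H
    simp only [Octonion.ostar_mul, Octonion.ostar_star, Octonion.omul_one] at H
    rw [← hd, Octonion.star_e0, Octonion.omul_neg, Octonion.oneg_mul, sub_neg_eq_add] at H
    rw [eq_sub_iff_add_eq] at H
    exact H.symm
  have hG : ∀ a m : Octonion,
      (a * m) * d - a * (m * d)
        = -((a * Octonion.e 0) * m) + a * (Octonion.e 0 * m)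
          + (a * m) * Octonion.e 0 - a * (m * Octonion.e 0) := by
    intro a m
    have H := B.comp_lm (Octonion.e 0) (star a) m
    simp only [h] at H
    simp only [Octonion.ostar_mul, Octonion.ostar_star] at H
    rw [Octonion.star_e0, Octonion.omul_neg, Octonion.oneg_mul, Octonion.oneg_mul,
      sub_neg_eq_add, hF, hF, Octonion.omul_add, Octonion.omul_add, Octonion.omul_neg] at H
    have H2 := sub_eq_zero_of_eq H.symm
    rw [← sub_eq_zero, ← H2]
    abel
  have E1 := hG (Octonion.e 0) (Octonion.e 1)
  have E2 := hG (Octonion.e 0) (Octonion.e 3)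
  have E3 := hG (Octonion.e 1) (Octonion.e 3)
  have E4 : (-1 : Octonion) - -1
      = (-(d * Octonion.e 0) + Octonion.e 0 * d + d * d) - -1 := by
    have H := B.comp_rm (Octonion.e 0) (Octonion.e 0) 1
    rw [Octonion.e0_mul_e0] at H
    simp only [h, map_neg, LinearMap.neg_apply, B.one_r] at H
    rw [← hd, hF d] at H
    simp only [Octonion.ostar_one, Octonion.star_e0, Octonion.omul_one, Octonion.omul_neg,
      Octonion.oneg_mul, neg_neg] at H
    rw [Octonion.e0_mul_e0] at H
    exact H
  clear hF hG hd h
  rw [← Octonion.mk_c d] at E1 E2 E3 E4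
  set d1 := Octonion.c1 d with hd1
  set d2 := Octonion.c2 d with hd2
  clear hd1 hd2
  rw [Octonion.e0_def, Octonion.e1_def] at E1
  rw [Octonion.e0_def, Octonion.e3_def] at E2
  rw [Octonion.e0_def, Octonion.e1_def, Octonion.e3_def] at E3
  rw [Octonion.e0_def, Octonion.one_def_s15] at E4
  simp only [Octonion.mk_mul_mk, Octonion.neg_mk, Octonion.add_mk, Octonion.sub_mk,
    Octonion.mk_inj] at E1 E2 E3 E4
  obtain ⟨E1a, E1b⟩ := E1
  obtain ⟨E2a, E2b⟩ := E2
  obtain ⟨E3a, E3b⟩ := E3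
  obtain ⟨E4a, E4b⟩ := E4
  rw [Quaternion.ext_iff] at E1a E1b E2a E2b E3a E3b E4a E4b
  simp only [Quaternion.re_mul, Quaternion.imI_mul, Quaternion.imJ_mul, Quaternion.imK_mul,
    Quaternion.re_star, Quaternion.imI_star, Quaternion.imJ_star, Quaternion.imK_star,
    Quaternion.re_neg, Quaternion.imI_neg, Quaternion.imJ_neg, Quaternion.imK_neg,
    Quaternion.re_add, Quaternion.imI_add, Quaternion.imJ_add, Quaternion.imK_add,
    Quaternion.re_sub, Quaternion.imI_sub, Quaternion.imJ_sub, Quaternion.imK_sub,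
    Quaternion.re_one, Quaternion.imI_one, Quaternion.imJ_one, Quaternion.imK_one,
    Quaternion.re_zero, Quaternion.imI_zero, Quaternion.imJ_zero, Quaternion.imK_zero, Octonion.id_re, Octonion.id_imI, Octonion.id_imJ, Octonion.id_imK]
    at E1a E1b E2a E2b E3a E3b E4a E4b
  norm_num at E1a E1b E2a E2b E3a E3b E4a E4b
  obtain ⟨g1, g2, -⟩ := E4a
  have z1 : d2.imK = 0 := E2a.1
  have z2 : d2.imJ = 0 := E1b.2.1
  have z3 : d2.imI = 0 := E3a.2
  have z4 : d2.re = 0 := E1b.2.2.2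
  have z5 : d1.imK = 0 := E2b.1
  have z6 : d1.imJ = 0 := by linarith [E2b.2]
  have z7 : d1.imI = 2 := by linarith [E3b.2]
  rw [z1, z2, z3, z4, z5, z6, z7] at g1 g2
  norm_num at g1 g2
  nlinarith [g1, g2]
end
end
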